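/- arXiv:1012.4683 — 9 statements merged into one kernel-verified Lean document; each statement's English description precedes it below -/
import Mathlib

section
/- The bracket on ℂ[x,y] × ℂ[x,y] defined by ⟦(a₁,b₁),(a₂,b₂)⟧ = (a₁·∂_y a₂ − a₂·∂_y a₁ + x·b₂·∂_x a₁ − x·b₁·∂_x a₂ , a₁·∂_y b₂ − a₂·∂_y b₁ + x·b₂·∂_x b₁ − x·b₁·∂_x b₂) is a Lie bracket: it is ℂ-bilinear, alternating (⟦α,α⟧ = 0), and satisfies the Jacobi identity ⟦α,⟦β,γ⟧⟧ + ⟦β,⟦γ,α⟧⟧ + ⟦γ,⟦α,β⟧⟧ = 0 for all α,β,γ ∈ ℂ[x,y]². -/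
open MvPolynomial

/-- `ℂ[x,y]`, with `X 0 = x`, `X 1 = y`. -/
abbrev A : Type := MvPolynomial (Fin 2) ℂ

/-- The logarithmic Koszul bracket of the Poisson structure `{x,y} = x` on `ℂ[x,y]`,
written in the coordinates where `(a,b)` represents `a·(dx/x) + b·dy`. -/
noncomputable def logKoszul (α β : A × A) : A × A :=
  (α.1 * pderiv 1 β.1 - β.1 * pderiv 1 α.1 + X 0 * β.2 * pderiv 0 α.1
      - X 0 * α.2 * pderiv 0 β.1,
   α.1 * pderiv 1 β.2 - β.1 * pderiv 1 α.2 + X 0 * β.2 * pderiv 0 α.2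
      - X 0 * α.2 * pderiv 0 β.2)

lemma pderiv_pderiv_comm (p : A) :
    pderiv (1 : Fin 2) (pderiv 0 p) = pderiv 0 (pderiv 1 p) := by
  induction p using MvPolynomial.induction_on with
  | C a => simp
  | add p q hp hq => simp [hp, hq]
  | mul_X p i hp => fin_cases i <;> simp [pderiv_mul, hp] <;> ring

/-- The bracket `⟦−,−⟧` on `ℂ[x,y]²` is a Lie bracket: it is ℂ-bilinear, alternating,
and satisfies the Jacobi identity. -/
theorem logKoszul_is_lie_bracket :
    (∀ α β γ : A × A, logKoszul (α + β) γ = logKoszul α γ + logKoszul β γ) ∧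
    (∀ α β γ : A × A, logKoszul α (β + γ) = logKoszul α β + logKoszul α γ) ∧
    (∀ (c : ℂ) (α β : A × A), logKoszul (c • α) β = c • logKoszul α β) ∧
    (∀ (c : ℂ) (α β : A × A), logKoszul α (c • β) = c • logKoszul α β) ∧
    (∀ α : A × A, logKoszul α α = 0) ∧
    (∀ α β γ : A × A,
      logKoszul α (logKoszul β γ) + logKoszul β (logKoszul γ α) +
        logKoszul γ (logKoszul α β) = 0) := by
  refine ⟨?_, ?_, ?_, ?_, ?_, ?_⟩ <;> intros <;>
    simp only [logKoszul, Prod.fst_add, Prod.snd_add, Prod.smul_fst, Prod.smul_snd,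
      Prod.mk_add_mk, Prod.smul_mk, map_add, map_sub, map_smul, smul_eq_C_mul,
      pderiv_mul, pderiv_X_self, pderiv_X_of_ne (by decide : (1:Fin 2) ≠ 0), pderiv_X_of_ne (by decide : (0:Fin 2) ≠ 1), pderiv_C,
      pderiv_pderiv_comm, Prod.mk_eq_zero, Prod.mk.injEq, smul_eq_mul] <;>
    constructor <;> ring
end

section
/- The ℂ[x,y]-linear map H̃ : ℂ[x,y]² → Der(ℂ[x,y]) sending (a,b) to the derivation a·∂_y − x·b·∂_x is a homomorphism of Lie algebras: for all α, β ∈ ℂ[x,y]², H̃(⟦α,β⟧) = H̃(α)∘H̃(β) − H̃(β)∘H̃(α) as derivations of ℂ[x,y], where ⟦(a₁,b₁),(a₂,b₂)⟧ = (a₁·∂_y a₂ − a₂·∂_y a₁ + x·b₂·∂_x a₁ − x·b₁·∂_x a₂ , a₁·∂_y b₂ − a₂·∂_y b₁ + x·b₂·∂_x b₁ − x·b₁·∂_x b₂). -/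
open MvPolynomial

lemma pderiv_comm' {σ R : Type*} [CommSemiring R] (i j : σ) (f : MvPolynomial σ R) :
    pderiv i (pderiv j f) = pderiv j (pderiv i f) := by
  classical
  induction f using MvPolynomial.induction_on with
  | C => simp
  | add p q hp hq => simp [hp, hq]
  | mul_X p k hp =>
    simp only [pderiv_mul, map_add, pderiv_X, hp]
    rcases eq_or_ne k i with rfl | hki <;> rcases eq_or_ne k j with rfl | hkj <;>
      simp_all [Pi.single_apply]

/-- The logarithmic Hamiltonian map `H̃(a,b) = a·∂_y − x·b·∂_x`, viewed as sending a pair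
`(a,b)` (representing `a·(dx/x) + b·dy`) to the corresponding derivation of `ℂ[x,y]`. -/
noncomputable def Ht (α : A × A) (f : A) : A :=
  α.1 * pderiv 1 f - X 0 * α.2 * pderiv 0 f

/-- The logarithmic Hamiltonian map `H̃` is a homomorphism of Lie algebras:
`H̃(⟦α,β⟧) = H̃(α)∘H̃(β) − H̃(β)∘H̃(α)` as derivations of `ℂ[x,y]`. -/
theorem Ht_lie_hom (α β : A × A) :
    Ht (logKoszul α β) = (fun f => Ht α (Ht β f) - Ht β (Ht α f)) := by
  funext f
  simp only [Ht, logKoszul, pderiv_mul, map_sub, map_add, pderiv_X_self,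
    pderiv_X_of_ne (show (1:Fin 2) ≠ 0 by decide),
    pderiv_X_of_ne (show (0:Fin 2) ≠ 1 by decide), mul_zero, zero_mul, mul_one]
  rw [pderiv_comm' 0 1 f]
  ring
end

section
/- The ℂ-linear map d¹ : ℂ[x,y] × ℂ[x,y] → ℂ[x,y] given by d¹(f₁,f₂) = x·∂_x f₁ + ∂_y f₂ is surjective; hence the second logarithmic Poisson cohomology space H²_PS of the Poisson bracket {x,y} = x on ℂ[x,y] vanishes. -/
open MvPolynomial

/-- The map `d¹(f₁,f₂) = x·∂_x f₁ + ∂_y f₂`, the top differential of the logarithmic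
Poisson complex of the bracket `{x,y} = x` along the ideal `(x)`, is surjective;
hence the second logarithmic Poisson cohomology space `H²_PS` vanishes. -/
theorem d1_PS_surjective :
    Function.Surjective
      (fun p : A × A => X 0 * pderiv 0 p.1 + pderiv 1 p.2) := by
  intro g
  suffices h : ∃ F : A, pderiv 1 F = g by
    obtain ⟨F, hF⟩ := h
    exact ⟨(0, F), by simp [hF]⟩
  induction g using MvPolynomial.induction_on' with
  | monomial d c =>
    refine ⟨monomial (d + Finsupp.single 1 1) (c / ((d 1 : ℂ) + 1)), ?_⟩
    rw [pderiv_monomial]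
    have h1 : (d + Finsupp.single 1 1 : Fin 2 →₀ ℕ) 1 = d 1 + 1 := by simp
    have h2 : (d + Finsupp.single 1 1 : Fin 2 →₀ ℕ) - Finsupp.single 1 1 = d := by
      ext i; simp
    have h3 : ((d 1 : ℂ) + 1) ≠ 0 := Nat.cast_add_one_ne_zero (d 1)
    rw [h1, h2]
    congr 1
    push_cast
    field_simp
  | add p q hp hq =>
    obtain ⟨F1, h1⟩ := hp
    obtain ⟨F2, h2⟩ := hq
    exact ⟨F1 + F2, by simp [h1, h2]⟩
end

section
/- For every pair (f₁,f₂) ∈ ℂ[x,y]² satisfying x·∂_x f₁ + ∂_y f₂ = 0, there exists a unique constant c ∈ ℂ such that the pair (f₁, f₂ − c) lies in the image of the map f ↦ (∂_y f, −x·∂_x f); hence the first logarithmic Poisson cohomology space H¹_PS of the Poisson bracket {x,y} = x on ℂ[x,y] is isomorphic to ℂ. -/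
open MvPolynomial

lemma coeff_pderiv (i : Fin 2) (f : A) (s : Fin 2 →₀ ℕ) :
    coeff s (pderiv i f) = coeff (s + Finsupp.single i 1) f * (s i + 1) := by
  induction f using MvPolynomial.induction_on' with
  | monomial t a =>
    rw [pderiv_monomial, coeff_monomial, coeff_monomial]
    by_cases ht : t i = 0
    · have h1 : t - Finsupp.single i 1 = t := by
        ext j; rcases eq_or_ne j i with rfl | hj
        · simp [ht]
        · simp [Finsupp.single_apply, hj.symm]
      have h2 : t ≠ s + Finsupp.single i 1 := by
        intro he; apply absurd ht; rw [he]; simp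
      rw [h1, if_neg h2]
      by_cases h3 : t = s
      · subst h3; simp [ht]
      · rw [if_neg h3]; ring
    · have key : (t - Finsupp.single i 1 = s) ↔ (t = s + Finsupp.single i 1) := by
        constructor
        · intro he; ext j; rcases eq_or_ne j i with rfl | hj
          · have := Finsupp.ext_iff.mp he j
            simp [Finsupp.tsub_apply] at this
            simp [Finsupp.add_apply, Finsupp.single_apply]
            omega
          · have := Finsupp.ext_iff.mp he j
            simp [Finsupp.tsub_apply, Finsupp.single_apply, hj.symm] at this ⊢
            omega
        · intro he; subst he; ext j; rcases eq_or_ne j i with rfl | hj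
          · simp
          · simp [Finsupp.single_apply, hj.symm]
      by_cases h3 : t - Finsupp.single i 1 = s
      · rw [if_pos h3, if_pos (key.mp h3)]
        have : t i = s i + 1 := by
          rw [key.mp h3]; simp
        rw [this]; push_cast; ring
      · rw [if_neg h3, if_neg (fun he => h3 (key.mpr he))]; ring
  | add p q hp hq => simp [hp, hq, add_mul]

lemma pderiv_comm01 (f : A) : pderiv 0 (pderiv 1 f) = pderiv 1 (pderiv 0 f) := by
  apply MvPolynomial.ext
  intro s
  rw [coeff_pderiv, coeff_pderiv, coeff_pderiv, coeff_pderiv]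
  have h1 : ((s + Finsupp.single 0 1 : Fin 2 →₀ ℕ)) 1 = s 1 := by
    simp [Finsupp.add_apply, Finsupp.single_apply]
  have h2 : ((s + Finsupp.single 1 1 : Fin 2 →₀ ℕ)) 0 = s 0 := by
    simp [Finsupp.add_apply, Finsupp.single_apply]
  rw [h1, h2, add_right_comm]
  ring

lemma y_coeff_zero (h : A) (hd : pderiv 1 h = 0) (s : Fin 2 →₀ ℕ) (hs : s 1 ≠ 0) :
    coeff s h = 0 := by
  have key := coeff_pderiv 1 h (s - Finsupp.single 1 1)
  rw [hd] at key
  have hrec : s - Finsupp.single 1 1 + Finsupp.single 1 1 = s := by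
    ext j; rcases eq_or_ne j 1 with rfl | hj
    · simp [Finsupp.tsub_apply]; omega
    · simp [Finsupp.tsub_apply, Finsupp.add_apply, Finsupp.single_apply, hj.symm]
  rw [hrec] at key
  have h1 : ((s - Finsupp.single 1 1 : Fin 2 →₀ ℕ)) 1 = s 1 - 1 := by
    simp [Finsupp.tsub_apply]
  simp only [coeff_zero] at key
  have hne : (((s - Finsupp.single 1 1 : Fin 2 →₀ ℕ)) 1 : ℂ) + 1 ≠ 0 := by
    rw [h1, ← Nat.cast_one (R := ℂ), ← Nat.cast_add,
      Nat.sub_add_cancel (Nat.one_le_iff_ne_zero.mpr hs)]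
    exact_mod_cast hs
  exact (mul_eq_zero.mp key.symm).resolve_right hne

/-- For every cocycle `(f₁,f₂)` of the logarithmic Poisson complex of `{x,y} = x`
(i.e. `x·∂_x f₁ + ∂_y f₂ = 0`), there is a unique constant `c ∈ ℂ` such that
`(f₁, f₂ − c)` lies in the image of `d⁰ : f ↦ (∂_y f, −x·∂_x f)`; hence
`H¹_PS ≅ ℂ` for the bracket `{x,y} = x`. -/
theorem H1_PS_eq_C (f₁ f₂ : A) (h : X 0 * pderiv 0 f₁ + pderiv 1 f₂ = 0) :
    ∃! c : ℂ, ∃ g : A, (f₁, f₂ - C c) = (pderiv 1 g, -(X 0 * pderiv 0 g)) := by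
  classical
  set g₀ : A := f₁.support.sum
    (fun s => monomial (s + Finsupp.single 1 1) (coeff s f₁ / ((s 1 : ℂ) + 1))) with hg₀
  have hAg : pderiv 1 g₀ = f₁ := by
    rw [hg₀, map_sum]
    conv_rhs => rw [f₁.as_sum]
    refine Finset.sum_congr rfl fun s _ => ?_
    rw [pderiv_monomial]
    have hidx : s + Finsupp.single 1 1 - Finsupp.single 1 1 = s := by
      ext j; rcases eq_or_ne j 1 with rfl | hj
      · simp [Finsupp.tsub_apply]
      · simp [Finsupp.tsub_apply, Finsupp.add_apply, Finsupp.single_apply, hj.symm]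
    have hval : ((s + Finsupp.single 1 1 : Fin 2 →₀ ℕ)) 1 = s 1 + 1 := by simp
    have hne : ((s 1 : ℂ) + 1) ≠ 0 := by exact_mod_cast (Nat.succ_ne_zero (s 1))
    rw [hidx, hval]
    congr 1
    push_cast
    rw [div_mul_cancel₀ _ hne]
  set h₀ : A := f₂ + X 0 * pderiv 0 g₀ with hh₀
  have hB : pderiv 1 h₀ = 0 := by
    rw [hh₀, map_add, pderiv_mul, pderiv_X_of_ne (by decide), zero_mul, zero_add,
      ← pderiv_comm01, hAg]
    linear_combination h
  have hy0 : ∀ s ∈ h₀.support, s 1 = 0 := by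
    intro s hs
    by_contra hy
    exact (mem_support_iff.mp hs) (y_coeff_zero h₀ hB s hy)
  have hx0 : ∀ s ∈ h₀.support, s ≠ 0 → s 0 ≠ 0 := by
    intro s hs hsne hs0
    apply hsne
    ext j
    fin_cases j
    · simpa using hs0
    · simpa using hy0 s hs
  set c := coeff 0 h₀ with hc
  set φ : A := h₀.support.sum
    (fun s => if s = 0 then 0 else monomial s (coeff s h₀ / (s 0 : ℂ))) with hφ
  have hφy : pderiv 1 φ = 0 := by
    rw [hφ, map_sum]
    refine Finset.sum_eq_zero fun s hs => ?_
    split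
    · simp
    · rw [pderiv_monomial, hy0 s hs]
      simp
  have hCc : X 0 * pderiv 0 φ = h₀ - C c := by
    rw [hφ, map_sum, Finset.mul_sum]
    have step : ∀ s ∈ h₀.support,
        X 0 * pderiv 0 (if s = 0 then (0:A) else monomial s (coeff s h₀ / (s 0 : ℂ)))
        = (if s = 0 then 0 else monomial s (coeff s h₀)) := by
      intro s hs
      split
      · simp
      · rename_i hsne
        have hs0 := hx0 s hs hsne
        rw [pderiv_monomial, X, monomial_mul]
        have hidx : Finsupp.single (0 : Fin 2) 1 + (s - Finsupp.single 0 1) = s := by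
          ext j; rcases eq_or_ne j 0 with rfl | hj
          · simp [Finsupp.add_apply, Finsupp.tsub_apply]; omega
          · simp [Finsupp.add_apply, Finsupp.tsub_apply, Finsupp.single_apply, hj.symm]
        rw [hidx]
        congr 1
        rw [one_mul, div_mul_cancel₀]
        exact_mod_cast hs0
    rw [Finset.sum_congr rfl step]
    have split2 : ∀ s ∈ h₀.support, (if s = 0 then (0:A) else monomial s (coeff s h₀))
        = monomial s (coeff s h₀) - (if s = 0 then monomial s (coeff s h₀) else 0) := by
      intro s _; split <;> simp
    rw [Finset.sum_congr rfl split2, Finset.sum_sub_distrib, ← h₀.as_sum,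
      Finset.sum_ite_eq' h₀.support 0 (fun s => monomial s (coeff s h₀))]
    congr 1
    split
    · rw [hc]; simp [monomial_zero']
    · rename_i h0
      rw [notMem_support_iff] at h0
      rw [hc, h0]
      simp
  refine ⟨c, ⟨g₀ - φ, ?_⟩, ?_⟩
  · rw [Prod.mk.injEq]
    constructor
    · rw [map_sub, hAg, hφy, sub_zero]
    · rw [map_sub, mul_sub, hCc, hh₀]
      ring
  · rintro c' ⟨g', hg'⟩
    have h2 : f₂ - C c' = -(X 0 * pderiv 0 g') := ((Prod.mk.injEq _ _ _ _).mp hg').2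
    have hcc' : c' = constantCoeff f₂ := by
      have := congrArg constantCoeff h2
      simp only [map_sub, map_neg, map_mul, constantCoeff_X, zero_mul, neg_zero,
        constantCoeff_C] at this
      exact (sub_eq_zero.mp this).symm ▸ rfl
    have hcv : c = constantCoeff f₂ := by
      rw [hc, show (coeff 0 h₀ : ℂ) = constantCoeff h₀ from (congrFun constantCoeff_eq h₀).symm,
        hh₀]
      simp
    rw [hcc', hcv]
end

section
/- The ℂ-linear map d¹ : ℂ[x,y] × ℂ[x,y] → ℂ[x,y] given by d¹(f₁,f₂) = x·∂_x f₁ + x·∂_y f₂ − f₁ is surjective; hence the second Poisson cohomology space H²_P of the Poisson bracket {x,y} = x on ℂ[x,y] vanishes. -/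
open MvPolynomial

lemma d1_one_case (d : Fin 2 →₀ ℕ) (c : ℂ) (h : d 0 = 1) :
    (X 0 : A) * pderiv 1 (monomial (Finsupp.single 1 (d 1 + 1)) (c / (d 1 + 1))) = monomial d c := by
  have hc : ((d 1 : ℂ) + 1) ≠ 0 := by
    intro hh
    have := Nat.cast_add_one_ne_zero (R := ℂ) (d 1)
    push_cast at this; exact this hh
  have he : Finsupp.single (0:Fin 2) 1 + (Finsupp.single (1:Fin 2) (d 1 + 1) - Finsupp.single 1 1) = d := by
    ext i; fin_cases i <;> simp [h]
  have hcoef : c / ((d 1:ℂ)+1) * ((d 1 + 1 : ℕ) : ℂ) = c := by push_cast; field_simp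
  rw [pderiv_monomial]
  simp only [Finsupp.single_eq_same]
  rw [hcoef, X, monomial_mul, one_mul, he]

lemma d1_ne_one_case (d : Fin 2 →₀ ℕ) (c : ℂ) (h : d 0 ≠ 1) :
    (X 0 : A) * pderiv 0 (monomial d (c / ((d 0 : ℂ) - 1))) - monomial d (c / ((d 0 : ℂ) - 1)) = monomial d c := by
  have ha : (d 0 : ℂ) ≠ 1 := by exact_mod_cast fun hh => h (by exact_mod_cast hh)
  rcases Nat.eq_zero_or_pos (d 0) with h0 | h0
  · simp [pderiv_monomial, h0, monomial_zero]
    rw [← map_neg]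
    congr 1
    rw [div_neg, div_one, neg_neg]
  · have he : Finsupp.single (0:Fin 2) 1 + (d - Finsupp.single 0 1) = d := by
      ext i; fin_cases i <;> simp <;> omega
    rw [pderiv_monomial, X, monomial_mul, one_mul, he, ← map_sub]
    congr 1
    have h1 : (d 0 : ℂ) - 1 ≠ 0 := sub_ne_zero.mpr ha
    field_simp

/-- The map `d¹(f₁,f₂) = x·∂_x f₁ + x·∂_y f₂ − f₁`, the top differential of the Poisson
complex of the bracket `{x,y} = x` on `ℂ[x,y]`, is surjective; hence the second Poisson
cohomology space `H²_P` vanishes. -/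
theorem d1_P_surjective :
    Function.Surjective
      (fun p : A × A => X 0 * pderiv 0 p.1 + X 0 * pderiv 1 p.2 - p.1) := by
  intro g
  induction g using MvPolynomial.induction_on' with
  | monomial d c =>
    by_cases h : d 0 = 1
    · exact ⟨(0, monomial (Finsupp.single 1 (d 1 + 1)) (c / (d 1 + 1))), by
        simpa using d1_one_case d c h⟩
    · exact ⟨(monomial d (c / ((d 0 : ℂ) - 1)), 0), by
        simpa using d1_ne_one_case d c h⟩
  | add p q hp hq =>
    obtain ⟨u, hu⟩ := hp
    obtain ⟨v, hv⟩ := hq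
    refine ⟨u + v, ?_⟩
    simp only [Prod.fst_add, Prod.snd_add, map_add] at hu hv ⊢
    rw [← hu, ← hv]
    ring
end

section
/- For every g ∈ ℂ[x,y] there exists a unique polynomial p in the single variable y such that g − p lies in the image of the ℂ-linear map d¹ : ℂ[x,y]² → ℂ[x,y], d¹(f₁,f₂) = x²·∂_x f₁ + x·∂_y f₂ − x·f₁; hence the second logarithmic Poisson cohomology space H²_PS of the Poisson bracket {x,y} = x² on ℂ[x,y] is isomorphic to ℂ[y]. -/
open MvPolynomial

/-- Evaluation at `x = 0`, landing in `ℂ[y]`. -/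
noncomputable def phi : A →ₐ[ℂ] Polynomial ℂ := aeval ![0, Polynomial.X]

/-- Inclusion `ℂ[y] → ℂ[x,y]`. -/
noncomputable def psi : Polynomial ℂ →ₐ[ℂ] A := Polynomial.aeval (X 1)

/-- Setting `x = 0` inside `ℂ[x,y]`. -/
noncomputable def alp : A →ₐ[ℂ] A := aeval ![0, X 1]

lemma alp_psi (r : Polynomial ℂ) : alp (psi r) = psi r := by
  unfold alp psi
  rw [← Polynomial.aeval_algHom_apply]
  simp

lemma phi_psi (r : Polynomial ℂ) : phi (psi r) = r := by
  unfold phi psi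
  rw [← Polynomial.aeval_algHom_apply]
  simp

lemma psi_phi (g : A) : psi (phi g) = alp g := by
  have h : (psi.comp phi) = alp := by
    apply MvPolynomial.algHom_ext
    intro i
    fin_cases i <;> simp [phi, psi, alp]
  calc psi (phi g) = (psi.comp phi) g := rfl
    _ = alp g := by rw [h]

lemma sub_alp (g : A) : ∃ q : A, g - alp g = X 0 * q := by
  induction g using MvPolynomial.induction_on with
  | C a => exact ⟨0, by simp [alp]⟩
  | add p q hp hq =>
    obtain ⟨u, hu⟩ := hp; obtain ⟨v, hv⟩ := hq
    exact ⟨u + v, by rw [map_add]; linear_combination hu + hv⟩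
  | mul_X p n hp =>
    obtain ⟨u, hu⟩ := hp
    fin_cases n
    · refine ⟨p, ?_⟩
      show p * X 0 - alp (p * X 0) = X 0 * p
      rw [map_mul]
      have h0 : alp (X 0 : A) = 0 := by simp [alp]
      rw [h0]; ring
    · refine ⟨u * X 1, ?_⟩
      show p * X 1 - alp (p * X 1) = X 0 * (u * X 1)
      rw [map_mul]
      have h1 : alp (X 1 : A) = X 1 := by simp [alp]
      rw [h1]; linear_combination X 1 * hu

lemma L_surj (q : A) : ∃ f₁ f₂ : A, X 0 * pderiv 0 f₁ + pderiv 1 f₂ - f₁ = q := by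
  induction q using MvPolynomial.induction_on' with
  | monomial s c =>
    by_cases h : s 0 = 1
    · refine ⟨0, monomial (s + Finsupp.single 1 1) (c / ((s 1 : ℂ) + 1)), ?_⟩
      rw [pderiv_monomial]
      have h1 : (s + Finsupp.single 1 1) - Finsupp.single 1 1 = s := by
        ext i
        simp [Finsupp.tsub_apply, Finsupp.add_apply]
      have h2 : ((s + Finsupp.single 1 1 : Fin 2 →₀ ℕ)) 1 = s 1 + 1 := by
        rw [Finsupp.add_apply, Finsupp.single_eq_same]
      rw [h1, h2]
      have h3 : ((s 1 : ℂ) + 1) ≠ 0 := Nat.cast_add_one_ne_zero (s 1)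
      simp only [map_zero, mul_zero, zero_add, sub_zero]
      congr 1
      push_cast
      field_simp
    · refine ⟨monomial s (c / ((s 0 : ℂ) - 1)), 0, ?_⟩
      rw [pderiv_monomial]
      have hne : ((s 0 : ℂ) - 1) ≠ 0 := by
        intro hc
        apply h
        have h1 : (s 0 : ℂ) = 1 := by linear_combination hc
        exact_mod_cast h1
      simp only [map_zero, add_zero]
      rcases Nat.eq_zero_or_pos (s 0) with h0 | h0
      · have hz : c / ((s 0 : ℂ) - 1) * (s 0 : ℂ) = 0 := by rw [h0]; simp
        rw [hz, monomial_zero, mul_zero, zero_sub]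
        rw [h0] at hne ⊢
        rw [← map_neg]
        congr 1
        ring
      · have hxm : (X 0 : A) = monomial (Finsupp.single 0 1) 1 := rfl
        have hs : Finsupp.single 0 1 + (s - Finsupp.single 0 1) = s := by
          ext i
          rcases eq_or_ne i 0 with rfl | hi
          · rw [Finsupp.add_apply, Finsupp.tsub_apply, Finsupp.single_eq_same]
            omega
          · rw [Finsupp.add_apply, Finsupp.tsub_apply, Finsupp.single_eq_of_ne hi]
            omega
        rw [hxm, monomial_mul, one_mul, hs, ← map_sub]
        congr 1
        field_simp
  | add p q hp hq =>
    obtain ⟨a, b, ha⟩ := hp; obtain ⟨c, d, hc⟩ := hq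
    refine ⟨a + c, b + d, ?_⟩
    rw [map_add, map_add]
    linear_combination ha + hc

/-- For every `g ∈ ℂ[x,y]` there is a unique one-variable polynomial `p` such that
`g − p(y)` lies in the image of `d¹(f₁,f₂) = x²·∂_x f₁ + x·∂_y f₂ − x·f₁`, the top
differential of the logarithmic Poisson complex of `{x,y} = x²` along `(x²)`; hence
the second logarithmic Poisson cohomology `H²_PS` of `{x,y} = x²` is isomorphic to `ℂ[y]`. -/
theorem H2_PS_xsq_eq_Cy (g : A) :
    ∃! p : Polynomial ℂ, ∃ f₁ f₂ : A,
      g - Polynomial.aeval (X 1 : A) p =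
        X 0 ^ 2 * pderiv 0 f₁ + X 0 * pderiv 1 f₂ - X 0 * f₁ := by
  refine ⟨phi g, ?_, ?_⟩
  · obtain ⟨q, hq⟩ := sub_alp g
    obtain ⟨f₁, f₂, hf⟩ := L_surj q
    refine ⟨f₁, f₂, ?_⟩
    have hψ : Polynomial.aeval (X 1 : A) (phi g) = alp g := psi_phi g
    rw [hψ, hq]
    linear_combination X 0 * hf.symm
  · rintro p' ⟨f₁, f₂, hf⟩
    have key : g - Polynomial.aeval (X 1 : A) p'
        = X 0 * (X 0 * pderiv 0 f₁ + pderiv 1 f₂ - f₁) := by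
      linear_combination hf
    have h2 : alp g - psi p' = 0 := by
      have hc := congrArg alp key
      rw [map_sub, map_mul] at hc
      have hx0 : alp (X 0 : A) = 0 := by simp [alp]
      rw [hx0, zero_mul] at hc
      rw [← alp_psi p']
      exact hc
    have h3 : psi p' = psi (phi g) := by
      rw [psi_phi]
      exact (sub_eq_zero.mp h2).symm
    calc p' = phi (psi p') := (phi_psi p').symm
      _ = phi (psi (phi g)) := by rw [h3]
      _ = phi g := phi_psi _
end

section
/- For every g ∈ ℂ[x,y] there exists a unique polynomial p in the single variable y such that g − p lies in the image of the ℂ-linear map d¹ : ℂ[x,y]² → ℂ[x,y], d¹(f₁,f₂) = x²·∂_x f₁ + x²·∂_y f₂ − 2x·f₁; hence the second Poisson cohomology space H²_P of the Poisson bracket {x,y} = x² on ℂ[x,y] is isomorphic to ℂ[y]. -/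
open MvPolynomial

noncomputable def ee : A →ₐ[ℂ] Polynomial ℂ := aeval ![0, Polynomial.X]
noncomputable def sy : Polynomial ℂ →ₐ[ℂ] A := Polynomial.aeval (X 1)

lemma ee_sy (p : Polynomial ℂ) : ee (sy p) = p := by
  simp [ee, sy, ← Polynomial.aeval_algHom_apply]

lemma ee_X0 : ee (X 0) = 0 := by simp [ee]
lemma ee_X1 : ee (X 1) = Polynomial.X := by simp [ee]
lemma sy_X : sy Polynomial.X = X 1 := by simp [sy]

lemma pderiv1_surj (h : A) : ∃ f : A, pderiv 1 f = h := by
  induction h using MvPolynomial.induction_on' with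
  | monomial m c =>
    refine ⟨monomial (m + Finsupp.single 1 1) (c / (m 1 + 1)), ?_⟩
    have hne : ((m 1 : ℂ) + 1) ≠ 0 := Nat.cast_add_one_ne_zero (m 1)
    rw [pderiv_monomial]
    congr 1
    · ext i; simp
    · simp only [Finsupp.add_apply, Finsupp.single_eq_same]
      push_cast
      field_simp
  | add p q hp hq =>
    obtain ⟨f, hf⟩ := hp; obtain ⟨f', hf'⟩ := hq
    exact ⟨f + f', by simp [hf, hf']⟩

lemma split (h : A) : ∃ h₁ : A, h = sy (ee h) + X 0 * h₁ := by
  induction h using MvPolynomial.induction_on with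
  | C a => exact ⟨0, by simp [ee, sy]⟩
  | add p q hp hq =>
    obtain ⟨f, hf⟩ := hp; obtain ⟨f', hf'⟩ := hq
    refine ⟨f + f', ?_⟩
    rw [map_add, map_add, mul_add]
    calc p + q = (sy (ee p) + X 0 * f) + (sy (ee q) + X 0 * f') := by rw [← hf, ← hf']
      _ = _ := by ring
  | mul_X p i hp =>
    obtain ⟨f, hf⟩ := hp
    fin_cases i
    · refine ⟨p, ?_⟩
      show p * X 0 = sy (ee (p * X 0)) + X 0 * p
      rw [map_mul, ee_X0, mul_zero, map_zero, zero_add]; ring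
    · refine ⟨f * X 1, ?_⟩
      show p * X 1 = sy (ee (p * X 1)) + X 0 * (f * X 1)
      rw [map_mul, ee_X1, map_mul, sy_X]
      calc p * X 1 = (sy (ee p) + X 0 * f) * X 1 := by rw [← hf]
        _ = _ := by ring

lemma pderiv0_X1 : pderiv 0 (X 1 : A) = 0 := by
  rw [pderiv_X]; simp

lemma pderiv0_sy (p : Polynomial ℂ) : pderiv 0 (sy p) = 0 := by
  induction p using Polynomial.induction_on with
  | C a => show pderiv 0 (sy (Polynomial.C a)) = 0; simp [sy]
  | add p q hp hq => rw [map_add, map_add, hp, hq, add_zero]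
  | monomial n a h =>
    show pderiv 0 (sy (Polynomial.C a * Polynomial.X ^ (n + 1))) = 0
    rw [map_mul, map_pow, sy_X]
    rw [Derivation.leibniz, Derivation.leibniz_pow]
    simp [pderiv0_X1, sy]

/-- For every `g ∈ ℂ[x,y]` there is a unique one-variable polynomial `p` such that
`g − p(y)` lies in the image of `d¹(f₁,f₂) = x²·∂_x f₁ + x²·∂_y f₂ − 2x·f₁`, the top
differential of the Poisson complex of `{x,y} = x²`; hence the second Poisson
cohomology `H²_P` of `{x,y} = x²` is isomorphic to `ℂ[y]`. -/
theorem H2_P_xsq_eq_Cy (g : A) :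
    ∃! p : Polynomial ℂ, ∃ f₁ f₂ : A,
      g - Polynomial.aeval (X 1 : A) p =
        X 0 ^ 2 * pderiv 0 f₁ + X 0 ^ 2 * pderiv 1 f₂ - 2 * X 0 * f₁ := by
  refine ⟨ee g, ?_, ?_⟩
  · obtain ⟨h₁, hh₁⟩ := split g
    obtain ⟨h₂, hh₂⟩ := split h₁
    obtain ⟨f₂, hf₂⟩ := pderiv1_surj h₂
    refine ⟨C (-(1/2)) * sy (ee h₁), f₂, ?_⟩
    have hC : (2 : A) * C (-(1/2) : ℂ) = -1 := by
      rw [show (2:A) = C 2 from (map_ofNat C 2).symm, ← map_mul]; norm_num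
    have hd : pderiv 0 (C (-(1/2) : ℂ) * sy (ee h₁)) = 0 := by
      rw [Derivation.leibniz, pderiv0_sy]
      simp
    rw [hd, hf₂]
    show g - sy (ee g) = _
    have key : g - sy (ee g) = X 0 * h₁ := by nth_rewrite 1 [hh₁]; ring
    rw [key]
    nth_rewrite 1 [hh₂]
    linear_combination (X 0 * sy (ee h₁)) * hC
  · rintro p ⟨f₁, f₂, hp⟩
    have h2 : sy p = g - (X 0 ^ 2 * pderiv 0 f₁ + X 0 ^ 2 * pderiv 1 f₂ - 2 * X 0 * f₁) := by
      rw [← hp]; show _ = g - (g - sy p); ring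
    have h3 := congrArg ee h2
    rw [ee_sy] at h3
    simp only [map_sub, map_add, map_mul, map_pow, ee_X0] at h3
    simpa using h3
end

section
/- For every pair (f₁,f₂) ∈ ℂ[x,y]² satisfying x²·∂_x f₁ + x²·∂_y f₂ − 2x·f₁ = 0, there exist a polynomial g ∈ ℂ[x,y] and a unique triple consisting of a one-variable polynomial p and constants a₀, a₁ ∈ ℂ such that f₁ = x²·∂_y g + x·p(y) and f₂ = −x²·∂_x g + P(y) + a₀ + a₁·x, where P is the antiderivative of p with zero constant term; hence the first Poisson cohomology space H¹_P of the Poisson bracket {x,y} = x² on ℂ[x,y] is isomorphic to ℂ[y] ⊕ ℂ₁[x]. -/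
open MvPolynomial

namespace H1aux

abbrev B : Type := Polynomial (Polynomial ℂ)

noncomputable def φ : A →ₐ[ℂ] B := aeval ![Polynomial.X, Polynomial.C Polynomial.X]

noncomputable def Dy (F : B) : B := F.sum fun n c => Polynomial.C (Polynomial.derivative c) * Polynomial.X ^ n

lemma coeff_Dy (F : B) (k : ℕ) : (Dy F).coeff k = Polynomial.derivative (F.coeff k) := by
  rw [Dy, Polynomial.sum_def, Polynomial.finset_sum_coeff]
  simp only [Polynomial.coeff_C_mul, Polynomial.coeff_X_pow, mul_ite, mul_one, mul_zero]
  rw [Finset.sum_ite_eq F.support k]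
  by_cases h : k ∈ F.support
  · simp [h]
  · simp [h, Polynomial.notMem_support_iff.mp h]


lemma Dy_add (F G : B) : Dy (F + G) = Dy F + Dy G := by
  ext k; simp [coeff_Dy]
lemma Dy_C (c : Polynomial ℂ) : Dy (Polynomial.C c) = Polynomial.C (Polynomial.derivative c) := by
  ext k; simp [coeff_Dy, Polynomial.coeff_C]; split <;> simp
lemma Dy_mul_X (F : B) : Dy (F * Polynomial.X) = Dy F * Polynomial.X := by
  ext k
  cases k with
  | zero => simp [coeff_Dy]
  | succ n => simp [coeff_Dy, Polynomial.coeff_mul_X]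
lemma Dy_mul_C (F : B) (q : Polynomial ℂ) :
    Dy (F * Polynomial.C q) = Dy F * Polynomial.C q + F * Polynomial.C (Polynomial.derivative q) := by
  ext k
  simp only [coeff_Dy, Polynomial.coeff_add, Polynomial.coeff_mul_C, Polynomial.derivative_mul]


noncomputable def ψ : B →ₐ[ℂ] A := Polynomial.aevalTower (Polynomial.aeval (X 1)) (X 0)

lemma psi_phi (a : A) : ψ (φ a) = a := by
  have : (ψ.comp φ) = AlgHom.id ℂ A := by
    apply MvPolynomial.algHom_ext
    intro i
    fin_cases i <;> simp [φ, ψ]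
  exact congrFun (congrArg DFunLike.coe this) a

lemma phi_psi (b : B) : φ (ψ b) = b := by
  have : (φ.comp ψ) = AlgHom.id ℂ B := by
    apply Polynomial.algHom_ext'
    · apply Polynomial.algHom_ext
      simp [φ, ψ]
    · simp [φ, ψ]
  exact congrFun (congrArg DFunLike.coe this) b

lemma inj_phi : Function.Injective φ :=
  Function.LeftInverse.injective psi_phi

lemma phiX0 : φ (X 0) = Polynomial.X := by simp [φ]
lemma phiX1 : φ (X 1) = Polynomial.C Polynomial.X := by simp [φ]
lemma phiC (a : ℂ) : φ (MvPolynomial.C a) = Polynomial.C (Polynomial.C a) := by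
  rw [show (MvPolynomial.C a : A) = algebraMap ℂ A a from rfl, AlgHom.commutes]
  rfl

lemma pd00 : pderiv (0 : Fin 2) (X (0 : Fin 2) : A) = 1 := by rw [pderiv_X]; simp
lemma pd11 : pderiv (1 : Fin 2) (X (1 : Fin 2) : A) = 1 := by rw [pderiv_X]; simp
lemma pd01 : pderiv (0 : Fin 2) (X (1 : Fin 2) : A) = 0 := by
  rw [pderiv_X]; simp [Pi.single_eq_of_ne]
lemma pd10 : pderiv (1 : Fin 2) (X (0 : Fin 2) : A) = 0 := by
  rw [pderiv_X]; simp [Pi.single_eq_of_ne]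

lemma phi_pderiv0 (f : A) : Polynomial.derivative (φ f) = φ (pderiv 0 f) := by
  induction f using MvPolynomial.induction_on with
  | C a => simp [phiC]
  | add p q hp hq => simp only [map_add, hp, hq]
  | mul_X p i hp =>
    fin_cases i <;> simp only [Fin.zero_eta, Fin.mk_one]
    · rw [map_mul, phiX0, Polynomial.derivative_mul, Polynomial.derivative_X, mul_one, hp,
        pderiv_mul, pd00, mul_one, map_add, map_mul, phiX0]
    · rw [map_mul, phiX1, Polynomial.derivative_mul, Polynomial.derivative_C, mul_zero, add_zero,
        hp, pderiv_mul, pd01, mul_zero, add_zero, map_mul, phiX1]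

lemma phi_pderiv1 (f : A) : Dy (φ f) = φ (pderiv 1 f) := by
  induction f using MvPolynomial.induction_on with
  | C a => simp [phiC, Dy_C]
  | add p q hp hq => simp only [map_add, Dy_add, hp, hq]
  | mul_X p i hp =>
    fin_cases i <;> simp only [Fin.zero_eta, Fin.mk_one]
    · rw [map_mul, phiX0, Dy_mul_X, hp, pderiv_mul, pd10, mul_zero, add_zero, map_mul, phiX0]
    · rw [map_mul, phiX1, Dy_mul_C, Polynomial.derivative_X, Polynomial.C_1, mul_one, hp,
        pderiv_mul, pd11, mul_one, map_add, map_mul, phiX1]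

noncomputable def Pint (q : Polynomial ℂ) : Polynomial ℂ :=
  q.sum fun n a => Polynomial.C (a / (n + 1)) * Polynomial.X ^ (n + 1)

lemma deriv_Pint (q : Polynomial ℂ) : Polynomial.derivative (Pint q) = q := by
  rw [Pint, Polynomial.sum_def, map_sum]
  have : ∀ n ∈ q.support, Polynomial.derivative (Polynomial.C (q.coeff n / (n+1)) * Polynomial.X ^ (n+1))
      = Polynomial.C (q.coeff n) * Polynomial.X ^ n := by
    intro n _
    rw [Polynomial.derivative_C_mul, Polynomial.derivative_X_pow, Nat.add_sub_cancel,
      ← mul_assoc, ← map_mul]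
    push_cast
    rw [div_mul_cancel₀ _ (Nat.cast_add_one_ne_zero n : ((n : ℂ) + 1) ≠ 0)]
  rw [Finset.sum_congr rfl this]
  exact Polynomial.sum_C_mul_X_pow_eq q


section coeffs
variable {F₁ F₂ : B}

lemma hu0 (hB : Polynomial.X^2 * (Polynomial.derivative F₁ + Dy F₂) = Polynomial.X * (2 * F₁)) : F₁.coeff 0 = 0 := by
  have h := congrArg (fun Q : B => Q.coeff 1) hB
  rw [mul_comm, Polynomial.coeff_mul_X_pow'] at h
  norm_num at h
  exact h

lemma hE (hB : Polynomial.X^2 * (Polynomial.derivative F₁ + Dy F₂) = Polynomial.X * (2 * F₁)) (k : ℕ) :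
    F₁.coeff (k+1) * ((k : Polynomial ℂ)+1) + Polynomial.derivative (F₂.coeff k) = 2 * F₁.coeff (k+1) := by
  have h := congrArg (fun Q : B => Q.coeff (k+2)) hB
  rw [Polynomial.coeff_X_pow_mul, show k+2 = (k+1)+1 by rfl, Polynomial.coeff_X_mul, Polynomial.coeff_add, coeff_Dy,
    Polynomial.coeff_derivative, two_mul, Polynomial.coeff_add] at h
  linear_combination h

lemma hv0 (hB : Polynomial.X^2 * (Polynomial.derivative F₁ + Dy F₂) = Polynomial.X * (2 * F₁)) :
    Polynomial.derivative (F₂.coeff 0) = F₁.coeff 1 := by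
  have h := hE hB 0
  push_cast at h
  linear_combination h

lemma hv1 (hB : Polynomial.X^2 * (Polynomial.derivative F₁ + Dy F₂) = Polynomial.X * (2 * F₁)) :
    Polynomial.derivative (F₂.coeff 1) = 0 := by
  have h := hE hB 1
  push_cast at h
  linear_combination h

lemma hvk (hB : Polynomial.X^2 * (Polynomial.derivative F₁ + Dy F₂) = Polynomial.X * (2 * F₁)) (m : ℕ) :
    Polynomial.derivative (F₂.coeff (m+2)) = -(((m:Polynomial ℂ))+1) * F₁.coeff (m+3) := by
  have h := hE hB (m+2)
  push_cast at h
  linear_combination h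



end coeffs

section G
variable (F₁ F₂ : B)

noncomputable def gg : ℕ → Polynomial ℂ
  | 0 => Pint (F₁.coeff 2)
  | (j+1) => (-((j:ℂ)+1)⁻¹) • F₂.coeff (j+2)

noncomputable def G : B :=
  ∑ j ∈ Finset.range (F₂.natDegree + 2), Polynomial.C (gg F₁ F₂ j) * Polynomial.X ^ j

lemma coeffG (j : ℕ) : (G F₁ F₂).coeff j = gg F₁ F₂ j := by
  rw [G, Polynomial.finset_sum_coeff]
  simp only [Polynomial.coeff_C_mul, Polynomial.coeff_X_pow, mul_ite, mul_one, mul_zero]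
  rw [Finset.sum_ite_eq (Finset.range (F₂.natDegree + 2)) j]
  by_cases hj : j ∈ Finset.range (F₂.natDegree + 2)
  · simp [hj]
  · simp only [hj, if_false]
    have hle : F₂.natDegree + 2 ≤ j := by simpa [Finset.mem_range, not_lt] using hj
    obtain ⟨i, rfl⟩ : ∃ i, j = i+1 := ⟨j-1, by omega⟩
    show (0 : Polynomial ℂ) = (-((i:ℂ)+1)⁻¹) • F₂.coeff (i+2)
    rw [Polynomial.coeff_eq_zero_of_natDegree_lt (by omega), smul_zero]


end G

theorem keyB (F₁ F₂ : B)
    (hB : Polynomial.X^2 * Polynomial.derivative F₁ + Polynomial.X^2 * Dy F₂ - 2*Polynomial.X*F₁ = 0) :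
    ∃! t : Polynomial ℂ × ℂ × ℂ, ∃ (g : B) (P : Polynomial ℂ),
      P.derivative = t.1 ∧ P.coeff 0 = 0 ∧
      F₁ = Polynomial.X^2 * Dy g + Polynomial.X * Polynomial.C t.1 ∧
      F₂ = -(Polynomial.X^2 * Polynomial.derivative g) + Polynomial.C P + Polynomial.C (Polynomial.C t.2.1)
            + Polynomial.C (Polynomial.C t.2.2) * Polynomial.X := by
  have hB' : Polynomial.X^2 * (Polynomial.derivative F₁ + Dy F₂) = Polynomial.X * (2*F₁) := by linear_combination hB
  have c2 : ∀ (W : B) (k : ℕ), (Polynomial.X^2 * W).coeff (k+2) = W.coeff k := fun W k => Polynomial.coeff_X_pow_mul W 2 k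
  have c20 : ∀ W : B, (Polynomial.X^2*W).coeff 0 = 0 := by
    intro W; rw [mul_comm, Polynomial.coeff_mul_X_pow']; norm_num
  have c21 : ∀ W : B, (Polynomial.X^2*W).coeff 1 = 0 := by
    intro W; rw [mul_comm, Polynomial.coeff_mul_X_pow']; norm_num
  have cX0 : ∀ W : B, (Polynomial.X*W).coeff 0 = 0 := by
    intro W; rw [Polynomial.mul_coeff_zero, Polynomial.coeff_X_zero, zero_mul]
  have cX : ∀ (W : B) (k : ℕ), (Polynomial.X*W).coeff (k+1) = W.coeff k := fun W k => Polynomial.coeff_X_mul W k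
  refine ⟨(Polynomial.derivative (F₂.coeff 0), (F₂.coeff 0).coeff 0, (F₂.coeff 1).coeff 0),
    ⟨G F₁ F₂, F₂.coeff 0 - Polynomial.C ((F₂.coeff 0).coeff 0), ?_, ?_, ?_, ?_⟩, ?_⟩
  · rw [map_sub, Polynomial.derivative_C, sub_zero]
  · rw [Polynomial.coeff_sub, Polynomial.coeff_C_zero, sub_self]
  · -- F₁ = Polynomial.X^2 * Dy G + Polynomial.X * C p
    refine Polynomial.ext fun k => ?_
    rcases k with _|_|m
    · rw [Polynomial.coeff_add, c20, cX0, hu0 hB', add_zero]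
    · rw [Polynomial.coeff_add, c21, show (1:ℕ) = 0+1 from rfl, cX, Polynomial.coeff_C_zero, zero_add, hv0 hB']
      norm_num
    · rw [Polynomial.coeff_add, c2, show m+2 = (m+1)+1 from rfl, cX, Polynomial.coeff_C,
        if_neg (Nat.succ_ne_zero m), add_zero, coeff_Dy, coeffG]
      rcases m with _|i
      · rw [show gg F₁ F₂ 0 = Pint (F₁.coeff 2) from rfl, deriv_Pint]
      · rw [show gg F₁ F₂ (i+1) = (-((i:ℂ)+1)⁻¹) • F₂.coeff (i+2) from rfl,
          Polynomial.derivative_smul, hvk hB' i, Polynomial.smul_eq_C_mul]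
        have hc : ((i : Polynomial ℂ) + 1) = Polynomial.C ((i:ℂ)+1) := by
          rw [map_add, map_one, Polynomial.C_eq_natCast]
        rw [hc, neg_mul, mul_neg, map_neg, neg_mul, neg_neg, ← mul_assoc, ← map_mul,
          inv_mul_cancel₀ (Nat.cast_add_one_ne_zero i), map_one, one_mul]
  · -- F₂ = -(Polynomial.X^2 G') + C P + C C a₀ + C C a₁ * Polynomial.X
    refine Polynomial.ext fun k => ?_
    rcases k with _|_|m
    · rw [Polynomial.coeff_add, Polynomial.coeff_add, Polynomial.coeff_add, Polynomial.coeff_neg, c20, neg_zero, zero_add, Polynomial.coeff_C_zero,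
        Polynomial.coeff_C_zero, Polynomial.mul_coeff_zero, Polynomial.coeff_X_zero, mul_zero, add_zero, sub_add_cancel]
    · rw [Polynomial.coeff_add, Polynomial.coeff_add, Polynomial.coeff_add, Polynomial.coeff_neg, c21, neg_zero, zero_add,
        Polynomial.coeff_C, if_neg one_ne_zero, Polynomial.coeff_C, if_neg one_ne_zero, add_zero, zero_add,
        show (1:ℕ) = 0+1 from rfl, Polynomial.coeff_mul_X, Polynomial.coeff_C_zero]
      have h0 := Polynomial.natDegree_eq_zero_of_derivative_eq_zero (hv1 hB')
      rw [zero_add]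
      simpa using Polynomial.eq_C_of_natDegree_eq_zero h0
    · rw [Polynomial.coeff_add, Polynomial.coeff_add, Polynomial.coeff_add, Polynomial.coeff_neg, c2, Polynomial.coeff_C, if_neg (Nat.succ_ne_zero _),
        Polynomial.coeff_C, if_neg (Nat.succ_ne_zero _), show m+2 = (m+1)+1 from rfl, Polynomial.coeff_mul_X,
        Polynomial.coeff_C, if_neg (Nat.succ_ne_zero _), add_zero, add_zero, add_zero,
        Polynomial.coeff_derivative, coeffG,
        show gg F₁ F₂ (m+1) = (-((m:ℂ)+1)⁻¹) • F₂.coeff (m+2) from rfl, Polynomial.smul_eq_C_mul]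
      have hc : ((m : Polynomial ℂ) + 1) = Polynomial.C ((m:ℂ)+1) := by
        rw [map_add, map_one, Polynomial.C_eq_natCast]
      rw [hc, map_neg, neg_mul, neg_mul, neg_neg, mul_assoc, mul_comm (F₂.coeff (m+2)),
        ← mul_assoc, ← map_mul, inv_mul_cancel₀ (Nat.cast_add_one_ne_zero m), map_one, one_mul]
  · -- uniqueness
    rintro ⟨p, a₀, a₁⟩ ⟨g, P, hP, hP0, h3, h4⟩
    have e1 : p = Polynomial.derivative (F₂.coeff 0) := by
      have := congrArg (fun Q : B => Q.coeff 1) h3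
      simp only at this
      rw [Polynomial.coeff_add, c21, show (1:ℕ) = 0+1 from rfl, cX, Polynomial.coeff_C_zero, zero_add] at this
      rw [zero_add] at this
      rw [hv0 hB']
      simpa using this.symm
    have e2 : a₀ = (F₂.coeff 0).coeff 0 := by
      have := congrArg (fun Q : B => Q.coeff 0) h4
      simp only at this
      rw [Polynomial.coeff_add, Polynomial.coeff_add, Polynomial.coeff_add, Polynomial.coeff_neg, c20, neg_zero, zero_add, Polynomial.coeff_C_zero,
        Polynomial.coeff_C_zero, Polynomial.mul_coeff_zero, Polynomial.coeff_X_zero, mul_zero, add_zero] at this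
      have := congrArg (fun q : Polynomial ℂ => q.coeff 0) this
      simp only [Polynomial.coeff_add, hP0, Polynomial.coeff_C_zero, zero_add] at this
      exact this.symm
    have e3 : a₁ = (F₂.coeff 1).coeff 0 := by
      have := congrArg (fun Q : B => Q.coeff 1) h4
      simp only at this
      rw [Polynomial.coeff_add, Polynomial.coeff_add, Polynomial.coeff_add, Polynomial.coeff_neg, c21, neg_zero, zero_add,
        Polynomial.coeff_C, if_neg one_ne_zero, Polynomial.coeff_C, if_neg one_ne_zero, add_zero, zero_add,
        show (1:ℕ) = 0+1 from rfl, Polynomial.coeff_mul_X, Polynomial.coeff_C_zero] at this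
      rw [this, Polynomial.coeff_C_zero]
    simp only [Prod.mk.injEq]
    exact ⟨e1, e2, e3⟩

end H1aux

namespace H1aux

lemma phi_aeval (p : Polynomial ℂ) : φ (Polynomial.aeval (X 1 : A) p) = Polynomial.C p := by
  rw [← Polynomial.aeval_algHom_apply, phiX1]
  have hC : (Polynomial.C : Polynomial ℂ →+* B) Polynomial.X
      = ((Algebra.ofId (Polynomial ℂ) B).restrictScalars ℂ) Polynomial.X := rfl
  rw [hC, Polynomial.aeval_algHom_apply, Polynomial.aeval_X_left_apply]
  rfl

lemma key1 (g : A) (q : Polynomial ℂ) :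
    φ (X 0 ^ 2 * pderiv 1 g + X 0 * Polynomial.aeval (X 1 : A) q)
      = Polynomial.X^2 * Dy (φ g) + Polynomial.X * Polynomial.C q := by
  rw [map_add, map_mul, map_mul, map_pow, phiX0, phi_aeval, phi_pderiv1]

lemma key2 (g : A) (P : Polynomial ℂ) (a₀ a₁ : ℂ) :
    φ (-(X 0 ^ 2 * pderiv 0 g) + Polynomial.aeval (X 1 : A) P + C a₀ + C a₁ * X 0)
      = -(Polynomial.X^2 * Polynomial.derivative (φ g)) + Polynomial.C P
        + Polynomial.C (Polynomial.C a₀) + Polynomial.C (Polynomial.C a₁) * Polynomial.X := by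
  rw [map_add, map_add, map_add, map_neg, map_mul, map_mul, map_pow, phiX0, phi_aeval,
    phiC, phiC, phi_pderiv0]

end H1aux

/-- For every cocycle `(f₁,f₂)` of the Poisson complex of `{x,y} = x²`
(i.e. `x²·∂_x f₁ + x²·∂_y f₂ − 2x·f₁ = 0`), there exist `g ∈ ℂ[x,y]` and a unique triple
`(p, a₀, a₁)` — a one-variable polynomial `p` and constants `a₀, a₁ ∈ ℂ` — such that
`f₁ = x²·∂_y g + x·p(y)` and `f₂ = −x²·∂_x g + P(y) + a₀ + a₁·x`, where `P` is the
antiderivative of `p` with zero constant term; hence the first Poisson cohomology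
`H¹_P` of `{x,y} = x²` is isomorphic to `ℂ[y] ⊕ ℂ₁[x]`. -/
theorem H1_P_xsq (f₁ f₂ : A)
    (h : X 0 ^ 2 * pderiv 0 f₁ + X 0 ^ 2 * pderiv 1 f₂ - 2 * X 0 * f₁ = 0) :
    ∃! t : Polynomial ℂ × ℂ × ℂ, ∃ (g : A) (P : Polynomial ℂ),
      P.derivative = t.1 ∧ P.coeff 0 = 0 ∧
      f₁ = X 0 ^ 2 * pderiv 1 g + X 0 * Polynomial.aeval (X 1 : A) t.1 ∧
      f₂ = -(X 0 ^ 2 * pderiv 0 g) + Polynomial.aeval (X 1 : A) P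
            + C t.2.1 + C t.2.2 * X 0 := by
  have hB : Polynomial.X^2 * Polynomial.derivative (H1aux.φ f₁)
      + Polynomial.X^2 * H1aux.Dy (H1aux.φ f₂) - 2*Polynomial.X*(H1aux.φ f₁) = 0 := by
    have h2 := congrArg H1aux.φ h
    simp only [map_add, map_sub, map_mul, map_pow, map_zero, map_ofNat, H1aux.phiX0] at h2
    rw [H1aux.phi_pderiv0, H1aux.phi_pderiv1]
    exact h2
  obtain ⟨t, ⟨G, P, h1, h2, h3, h4⟩, huniq⟩ := H1aux.keyB _ _ hB
  refine ⟨t, ⟨H1aux.ψ G, P, h1, h2, ?_, ?_⟩, ?_⟩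
  · apply H1aux.inj_phi
    rw [H1aux.key1, H1aux.phi_psi, ← h3]
  · apply H1aux.inj_phi
    rw [H1aux.key2, H1aux.phi_psi, ← h4]
  · rintro t' ⟨g, P', k1, k2, k3, k4⟩
    refine huniq t' ⟨H1aux.φ g, P', k1, k2, ?_, ?_⟩
    · rw [← H1aux.key1, ← k3]
    · rw [← H1aux.key2, ← k4]
end

section
/- The image of the ℂ[x,y,z]-linear map d² : ℂ[x,y,z]³ → ℂ[x,y,z] given by d²(f₁,f₂,f₃) = x·z·∂_z f₂ + x·y·∂_y f₃ equals the ideal (xy, xz) generated by xy and xz; in particular the image of d² is strictly larger than the image of the Poisson differential δ²(f₁,f₂,f₃) = xyz·(∂_z f₂ + ∂_y f₃), so the third logarithmic Poisson cohomology ℂ[x,y,z]/im(d²) and the third Poisson cohomology ℂ[x,y,z]/im(δ²) of the bracket {y,z} = xyz are quotients by different ideals. -/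
open MvPolynomial

/-- `ℂ[x,y,z]`, with `X 0 = x`, `X 1 = y`, `X 2 = z`. -/
abbrev B : Type := MvPolynomial (Fin 3) ℂ

/-- The top differential of the logarithmic Poisson complex of the bracket
`{x,y} = 0`, `{x,z} = 0`, `{y,z} = xyz` along `(xyz)`:
`d²(f₁,f₂,f₃) = xz·∂_z f₂ + xy·∂_y f₃`. -/
noncomputable def d2log (f : B × B × B) : B :=
  X 0 * X 2 * pderiv 2 f.2.1 + X 0 * X 1 * pderiv 1 f.2.2

/-- The top differential of the Poisson complex of the same bracket:
`δ²(f₁,f₂,f₃) = xyz·(∂_z f₂ + ∂_y f₃)`. -/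
noncomputable def delta2 (f : B × B × B) : B :=
  X 0 * X 1 * X 2 * (pderiv 2 f.2.1 + pderiv 1 f.2.2)

/-- Every polynomial has an antiderivative with respect to each variable. -/
lemma exists_pderiv_eq (i : Fin 3) (p : B) : ∃ F : B, pderiv i F = p := by
  induction p using MvPolynomial.induction_on' with
  | monomial s a =>
    refine ⟨monomial (s + Finsupp.single i 1) (a / ((s i : ℂ) + 1)), ?_⟩
    rw [pderiv_monomial]
    have h1 : s + Finsupp.single i 1 - Finsupp.single i 1 = s := by
      ext j; simp [Finsupp.single_apply]
    have h2 : ((s + Finsupp.single i 1 : Fin 3 →₀ ℕ)) i = s i + 1 := by simp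
    rw [h1, h2]
    push_cast
    congr 1
    have hne : ((s i : ℂ) + 1) ≠ 0 := by
      intro h
      have : ((s i + 1 : ℕ) : ℂ) = 0 := by push_cast; linear_combination h
      exact Nat.succ_ne_zero (s i) (Nat.cast_injective (R := ℂ) (this.trans Nat.cast_zero.symm))
    field_simp
  | add p q hp hq =>
    obtain ⟨F, hF⟩ := hp
    obtain ⟨G, hG⟩ := hq
    exact ⟨F + G, by simp [hF, hG]⟩

/-- The image of the logarithmic top differential `d²` equals the ideal `(xy, xz)`;
in particular it strictly contains the image of the Poisson top differential `δ²`, so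
the third logarithmic Poisson cohomology `ℂ[x,y,z]/im(d²)` and the third Poisson
cohomology `ℂ[x,y,z]/im(δ²)` of the bracket `{y,z} = xyz` are quotients by different
ideals. -/
theorem range_d2log_eq_and_strictly_contains_delta2 :
    Set.range d2log = (Ideal.span {(X 0 * X 1 : B), (X 0 * X 2 : B)} : Ideal B) ∧
    Set.range delta2 ⊂ Set.range d2log := by
  have hrange : Set.range d2log = (Ideal.span {(X 0 * X 1 : B), (X 0 * X 2 : B)} : Ideal B) := by
    apply Set.eq_of_subset_of_subset
    · rintro _ ⟨f, rfl⟩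
      show d2log f ∈ Ideal.span {(X 0 * X 1 : B), (X 0 * X 2 : B)}
      rw [Ideal.mem_span_pair]
      exact ⟨pderiv 1 f.2.2, pderiv 2 f.2.1, by unfold d2log; ring⟩
    · rintro p (hp : p ∈ Ideal.span {(X 0 * X 1 : B), (X 0 * X 2 : B)})
      rw [Ideal.mem_span_pair] at hp
      obtain ⟨a, b, hab⟩ := hp
      obtain ⟨F, hF⟩ := exists_pderiv_eq 2 b
      obtain ⟨G, hG⟩ := exists_pderiv_eq 1 a
      exact ⟨(0, F, G), by unfold d2log; rw [hF, hG, ← hab]; ring⟩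
  refine ⟨hrange, ?_, ?_⟩
  · rintro _ ⟨f, rfl⟩
    refine ⟨(0, X 1 * f.2.1, X 2 * f.2.2), ?_⟩
    unfold d2log delta2
    simp only [pderiv_mul, pderiv_X_self, pderiv_X_of_ne (by decide : (1 : Fin 3) ≠ 2),
      pderiv_X_of_ne (by decide : (2 : Fin 3) ≠ 1)]
    ring
  · intro hsub
    have hxy : (X 0 * X 1 : B) ∈ Set.range d2log := by
      rw [hrange]
      exact Ideal.subset_span (by simp)
    obtain ⟨f, hf⟩ := hsub hxy
    have := congrArg (aeval ![X 0, X 1, 0] : B →ₐ[ℂ] B) hf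
    simp [delta2, map_mul] at this
end
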